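/- Let G be a topological group, let K, P, L be affine G-flows, let φ: K → P be an affine G-irreducible extension, and let ψ: P → L be a proximally irreducible extension. Then ψ ∘ φ: K → L is a proximally irreducible extension. -/

import Mathlib

universe u v w x

/-- An affine `G`-flow: a nonempty compact convex subset of a Hausdorff locally convex
real topological vector space, equipped with a continuous action of `G` by affine
homeomorphisms.  The action is recorded as a function `smul : G → E → E` on the ambient
space whose behaviour is only constrained on `carrier`. -/
structure AffineFlow (G : Type u) [Group G] [TopologicalSpace G] [IsTopologicalGroup G] where
  /-- the ambient locally convex topological real vector space -/
  E : Type v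
  [instAddCommGroup : AddCommGroup E]
  [instModule : Module ℝ E]
  [instTopologicalSpace : TopologicalSpace E]
  [instT2Space : T2Space E]
  [instTopologicalAddGroup : IsTopologicalAddGroup E]
  [instContinuousSMul : ContinuousSMul ℝ E]
  [instLocallyConvexSpace : LocallyConvexSpace ℝ E]
  /-- the compact convex set itself -/
  carrier : Set E
  nonempty' : carrier.Nonempty
  isCompact' : IsCompact carrier
  convex' : Convex ℝ carrier
  /-- the action of `G` -/
  smul : G → E → E
  smul_mem' : ∀ g : G, ∀ x ∈ carrier, smul g x ∈ carrier
  one_smul' : ∀ x ∈ carrier, smul 1 x = x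
  mul_smul' : ∀ g h : G, ∀ x ∈ carrier, smul (g * h) x = smul g (smul h x)
  continuousOn_smul' : ContinuousOn (fun p : G × E => smul p.1 p.2) (Set.univ ×ˢ carrier)
  smul_affine' : ∀ g : G, ∀ x ∈ carrier, ∀ y ∈ carrier, ∀ t : ℝ, 0 ≤ t → t ≤ 1 →
    smul g (t • x + (1 - t) • y) = t • smul g x + (1 - t) • smul g y

attribute [instance] AffineFlow.instAddCommGroup AffineFlow.instModule
  AffineFlow.instTopologicalSpace AffineFlow.instT2Space AffineFlow.instTopologicalAddGroup
  AffineFlow.instContinuousSMul AffineFlow.instLocallyConvexSpace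

/-- An affine `G`-map between affine `G`-flows: a continuous affine `G`-equivariant map
(recorded on the ambient spaces, with all conditions on the carriers). -/
def IsAffineGMap {G : Type u} [Group G] [TopologicalSpace G] [IsTopologicalGroup G]
    (K : AffineFlow.{u, v} G) (L : AffineFlow.{u, w} G) (f : K.E → L.E) : Prop :=
  Set.MapsTo f K.carrier L.carrier ∧ ContinuousOn f K.carrier ∧
    (∀ g : G, ∀ x ∈ K.carrier, f (K.smul g x) = L.smul g (f x)) ∧
    ∀ x ∈ K.carrier, ∀ y ∈ K.carrier, ∀ t : ℝ, 0 ≤ t → t ≤ 1 →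
      f (t • x + (1 - t) • y) = t • f x + (1 - t) • f y

/-- An affine extension: a surjective affine `G`-map. -/
def IsAffineExtension {G : Type u} [Group G] [TopologicalSpace G] [IsTopologicalGroup G]
    (K : AffineFlow.{u, v} G) (L : AffineFlow.{u, w} G) (f : K.E → L.E) : Prop :=
  IsAffineGMap K L f ∧ f '' K.carrier = L.carrier

/-- An affine subflow: a nonempty closed convex `G`-invariant subset. -/
def AffineFlow.IsAffineSubflow {G : Type u} [Group G] [TopologicalSpace G] [IsTopologicalGroup G]
    (K : AffineFlow.{u, v} G) (C : Set K.E) : Prop :=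
  C.Nonempty ∧ C ⊆ K.carrier ∧ IsClosed C ∧ Convex ℝ C ∧ ∀ g : G, ∀ x ∈ C, K.smul g x ∈ C

/-- An affine extension `f : K → L` is affine `G`-irreducible if no proper affine subflow
of `K` maps onto `L`. -/
def IsAffineIrreducibleExt {G : Type u} [Group G] [TopologicalSpace G] [IsTopologicalGroup G]
    (K : AffineFlow.{u, v} G) (L : AffineFlow.{u, w} G) (f : K.E → L.E) : Prop :=
  IsAffineExtension K L f ∧
    ∀ C : Set K.E, K.IsAffineSubflow C → C ≠ K.carrier → f '' C ≠ L.carrier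

/-- An affine extension `f : K → L` is proximally irreducible if the only affine subflow
`C` of `K` meeting `conv (cl (ext K) ∩ f ⁻¹' {y})` for every `y ∈ cl (ext L)` is `K` itself. -/
def IsProximallyIrreducibleExt {G : Type u} [Group G] [TopologicalSpace G] [IsTopologicalGroup G]
    (K : AffineFlow.{u, v} G) (L : AffineFlow.{u, w} G) (f : K.E → L.E) : Prop :=
  IsAffineExtension K L f ∧
    ∀ C : Set K.E, K.IsAffineSubflow C →
      (∀ y ∈ closure (L.carrier.extremePoints ℝ),
        (C ∩ convexHull ℝ (closure (K.carrier.extremePoints ℝ) ∩ f ⁻¹' {y})).Nonempty) →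
      C = K.carrier

/-- An affine `G`-flow `K` is affine `G`-projective if for all affine `G`-flows `L`, `P`,
every affine `G`-map `φ : K → L` and every affine extension `π : P → L`, there is an
affine `G`-map `ψ : K → P` with `π ∘ ψ = φ` (on the carrier of `K`). -/
def IsAffineGProjective {G : Type u} [Group G] [TopologicalSpace G] [IsTopologicalGroup G]
    (K : AffineFlow.{u, v} G) : Prop :=
  ∀ (L : AffineFlow.{u, w} G) (P : AffineFlow.{u, x} G) (φ : K.E → L.E) (π : P.E → L.E),
    IsAffineGMap K L φ → IsAffineExtension P L π →
    ∃ ψ : K.E → P.E, IsAffineGMap K P ψ ∧ ∀ y ∈ K.carrier, π (ψ y) = φ y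



open Set Filter Topology

section General
variable {E : Type*} [AddCommGroup E] [Module ℝ E]

/-- Image of a convex hull under a map affine on a convex superset. -/
lemma aux_image_convexHull {F : Type*} [AddCommGroup F] [Module ℝ F]
    (f : E → F) {carrier : Set E} (hconv : Convex ℝ carrier)
    (haff : ∀ x ∈ carrier, ∀ y ∈ carrier, ∀ t : ℝ, 0 ≤ t → t ≤ 1 →
      f (t • x + (1 - t) • y) = t • f x + (1 - t) • f y)
    {s : Set E} (hs : s ⊆ carrier) :
    f '' (convexHull ℝ s) ⊆ convexHull ℝ (f '' s) := by
  have hsub : convexHull ℝ s ⊆ carrier := convexHull_min hs hconv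
  have hT : convexHull ℝ s ⊆ convexHull ℝ s ∩ f ⁻¹' (convexHull ℝ (f '' s)) := by
    apply convexHull_min
    · intro x hx
      exact ⟨subset_convexHull ℝ s hx, subset_convexHull ℝ _ ⟨x, hx, rfl⟩⟩
    · rintro x ⟨hx, hfx⟩ y ⟨hy, hfy⟩ a b ha hb hab
      have hb' : b = 1 - a := by linarith
      refine ⟨(convex_convexHull ℝ s) hx hy ha hb hab, ?_⟩
      have : f (a • x + (1 - a) • y) = a • f x + (1 - a) • f y :=
        haff x (hsub hx) y (hsub hy) a ha (by linarith)
      simp only [mem_preimage, hb', this]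
      exact (convex_convexHull ℝ (f '' s)) hfx hfy ha (by linarith) (by ring)
  rintro _ ⟨x, hx, rfl⟩
  exact (hT hx).2

/-- Image of a convex subset of the carrier under a map affine on the carrier is convex. -/
lemma aux_image_convex {F : Type*} [AddCommGroup F] [Module ℝ F]
    (f : E → F) {carrier : Set E}
    (haff : ∀ x ∈ carrier, ∀ y ∈ carrier, ∀ t : ℝ, 0 ≤ t → t ≤ 1 →
      f (t • x + (1 - t) • y) = t • f x + (1 - t) • f y)
    {s : Set E} (hs : s ⊆ carrier) (hsc : Convex ℝ s) :
    Convex ℝ (f '' s) := by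
  rintro _ ⟨x, hx, rfl⟩ _ ⟨y, hy, rfl⟩ a b ha hb hab
  have hb' : b = 1 - a := by linarith
  have := haff x (hs hx) y (hs hy) a ha (by linarith)
  refine ⟨a • x + (1 - a) • y, hsc hx hy ha (by linarith) (by ring), ?_⟩
  rw [this, hb']

end General


section Milman
variable {E : Type*} [AddCommGroup E] [Module ℝ E] [TopologicalSpace E]
  [IsTopologicalAddGroup E] [ContinuousSMul ℝ E]

lemma aux_isCompact_convexJoin {A B : Set E} (hA : IsCompact A) (hB : IsCompact B) :
    IsCompact (convexJoin ℝ A B) := by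
  have : convexJoin ℝ A B =
      (fun q : ℝ × E × E => q.1 • q.2.1 + (1 - q.1) • q.2.2) ''
        (Set.Icc (0:ℝ) 1 ×ˢ A ×ˢ B) := by
    ext z
    constructor
    · intro hz
      rw [mem_convexJoin] at hz
      obtain ⟨a, ha, b, hb, u, v, hu, hv, huv, hz⟩ := hz
      refine ⟨(u, a, b), ⟨⟨hu, by linarith⟩, ha, hb⟩, ?_⟩
      simp only
      rw [show (1:ℝ) - u = v by linarith, hz]
    · rintro ⟨⟨u, a, b⟩, ⟨⟨hu0, hu1⟩, ha, hb⟩, rfl⟩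
      rw [mem_convexJoin]
      exact ⟨a, ha, b, hb, u, 1 - u, hu0, by linarith, by ring, rfl⟩
  rw [this]
  apply IsCompact.image (isCompact_Icc.prod (hA.prod hB))
  fun_prop

lemma aux_extremePoints_mono {A B : Set E} {x : E} (hx : x ∈ B.extremePoints ℝ)
    (hxA : x ∈ A) (hAB : A ⊆ B) : x ∈ A.extremePoints ℝ := by
  rw [mem_extremePoints] at hx ⊢
  exact ⟨hxA, fun x₁ h₁ x₂ h₂ hseg => hx.2 x₁ (hAB h₁) x₂ (hAB h₂) hseg⟩

lemma aux_extremePoints_convexHull_biUnion {ι : Type*} (I : Finset ι) (K : ι → Set E)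
    (hconv : ∀ i, Convex ℝ (K i)) :
    (convexHull ℝ (⋃ i ∈ I, K i)).extremePoints ℝ ⊆ ⋃ i ∈ I, K i := by
  classical
  induction I using Finset.induction_on with
  | empty => simp
  | @insert a I ha IH =>
    intro x hx
    have hunion : (⋃ i ∈ insert a I, K i) = K a ∪ ⋃ i ∈ I, K i := by
      simp [Finset.mem_insert, Set.iUnion_or, Set.iUnion_union_distrib]
    rw [hunion] at hx
    rcases Set.eq_empty_or_nonempty (K a) with hKa | hKa
    · rw [hKa, Set.empty_union] at hx
      have := IH hx
      rw [hunion]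
      exact Set.subset_union_right this
    rcases Set.eq_empty_or_nonempty (⋃ i ∈ I, K i) with hS | hS
    · rw [hS, Set.union_empty, (hconv a).convexHull_eq] at hx
      rw [hunion]
      exact Set.subset_union_left hx.1
    rw [convexHull_union hKa hS, (hconv a).convexHull_eq, mem_extremePoints] at hx
    obtain ⟨hxmem, hext⟩ := hx
    rw [mem_convexJoin] at hxmem
    obtain ⟨p, hp, q, hq, u, v, hu, hv, huv, hxuv⟩ := hxmem
    rw [hunion]
    rcases eq_or_lt_of_le hu with hu0 | hu0
    · -- u = 0, x = q
      have hxq : x = q := by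
        rw [← hxuv, ← hu0]
        simp only [zero_smul, zero_add]
        rw [show v = 1 by linarith, one_smul]
      -- x is extreme in convexHull of the rest
      have hxrest : x ∈ (convexHull ℝ (⋃ i ∈ I, K i)).extremePoints ℝ := by
        refine aux_extremePoints_mono
          (B := convexJoin ℝ (K a) (convexHull ℝ (⋃ i ∈ I, K i)))
          ⟨?_, fun x₁ h₁ x₂ h₂ hs => (hext x₁ h₁ x₂ h₂ hs).1⟩
          (hxq ▸ hq) (subset_convexJoin_right hKa)
        exact subset_convexJoin_right hKa (hxq ▸ hq)
      exact Set.subset_union_right (IH hxrest)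
    rcases eq_or_lt_of_le hv with hv0 | hv0
    · have hxp : x = p := by
        rw [← hxuv, ← hv0]
        simp only [zero_smul, add_zero]
        rw [show u = 1 by linarith, one_smul]
      exact Set.subset_union_left (hxp ▸ hp)
    · -- 0 < u < 1 : x in open segment, hence p = x
      have hpmem : p ∈ convexJoin ℝ (K a) (convexHull ℝ (⋃ i ∈ I, K i)) :=
        subset_convexJoin_left (hS.convexHull) hp
      have hqmem : q ∈ convexJoin ℝ (K a) (convexHull ℝ (⋃ i ∈ I, K i)) :=
        subset_convexJoin_right hKa hq
      have := hext p hpmem q hqmem ⟨u, v, hu0, hv0, huv, hxuv⟩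
      exact Set.subset_union_left (this.1 ▸ hp)


lemma aux_isCompact_convexHull_biUnion [T2Space E] {ι : Type*} (I : Finset ι) (K : ι → Set E)
    (hconv : ∀ i, Convex ℝ (K i)) (hcomp : ∀ i, IsCompact (K i)) :
    IsCompact (convexHull ℝ (⋃ i ∈ I, K i)) ∧ Convex ℝ (convexHull ℝ (⋃ i ∈ I, K i)) := by
  classical
  refine ⟨?_, convex_convexHull ℝ _⟩
  induction I using Finset.induction_on with
  | empty => simp
  | @insert a I ha IH =>
    have hunion : (⋃ i ∈ insert a I, K i) = K a ∪ ⋃ i ∈ I, K i := by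
      simp [Finset.mem_insert, Set.iUnion_or, Set.iUnion_union_distrib]
    rw [hunion]
    rcases Set.eq_empty_or_nonempty (K a) with hKa | hKa
    · rwa [hKa, Set.empty_union]
    rcases Set.eq_empty_or_nonempty (⋃ i ∈ I, K i) with hS | hS
    · rw [hS, Set.union_empty, (hconv a).convexHull_eq]
      exact hcomp a
    rw [convexHull_union hKa hS, (hconv a).convexHull_eq]
    have hB : IsCompact (convexHull ℝ (⋃ i ∈ I, K i)) := IH
    have : convexJoin ℝ (K a) (convexHull ℝ (⋃ i ∈ I, K i)) =
        convexJoin ℝ (K a) (convexHull ℝ (⋃ i ∈ I, K i)) := rfl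
    exact aux_isCompact_convexJoin (hcomp a) hB

/-- **Milman's theorem**: if the closed convex hull of `t` is compact, its extreme points
lie in the closure of `t`. Here we assume `t` closed. -/
lemma aux_milman [T2Space E] [LocallyConvexSpace ℝ E] {t : Set E} (ht : IsCompact t)
    (hcl : IsCompact (closure (convexHull ℝ t))) :
    (closure (convexHull ℝ t)).extremePoints ℝ ⊆ t := by
  intro x hx
  by_contra hxt
  -- the set of differences x - p, p ∈ t, is compact, closed and misses 0
  have hF : IsCompact ((fun p => x - p) '' t) := ht.image (by fun_prop)
  have h0F : (0 : E) ∉ (fun p => x - p) '' t := by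
    rintro ⟨p, hp, hp0⟩
    rw [sub_eq_zero] at hp0
    exact hxt (hp0 ▸ hp)
  have hFc : ((fun p => x - p) '' t)ᶜ ∈ 𝓝 (0 : E) :=
    (hF.isClosed.isOpen_compl).mem_nhds h0F
  obtain ⟨N, hN, hNclosed, hNsub⟩ := exists_mem_nhds_isClosed_subset hFc
  obtain ⟨W, ⟨hW, hWconv⟩, hWN⟩ := (LocallyConvexSpace.convex_basis (𝕜 := ℝ) (0 : E)).mem_iff.1 hN
  -- cover t by translates of W
  have hUmem : ∀ p ∈ t, (fun y => y - p) ⁻¹' W ∈ 𝓝 p := by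
    intro p hp
    have : ContinuousAt (fun y => y - p) p := by fun_prop
    exact this.preimage_mem_nhds (by simpa using hW)
  obtain ⟨I, hIt, hIcov⟩ := ht.elim_nhds_subcover (fun p => (fun y => y - p) ⁻¹' W) hUmem
  set KK : E → Set E := fun p => closure (convexHull ℝ (t ∩ (fun y => y - p) ⁻¹' W)) with hKK
  have hKKconv : ∀ p, Convex ℝ (KK p) := fun p => (convex_convexHull ℝ _).closure
  have hKKsub : ∀ p, KK p ⊆ closure (convexHull ℝ t) := fun p =>
    closure_mono (convexHull_mono Set.inter_subset_left)
  have hKKcomp : ∀ p, IsCompact (KK p) :=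
    fun p => IsCompact.of_isClosed_subset hcl isClosed_closure (hKKsub p)
  -- the convex hull of the union of the pieces is everything
  obtain ⟨hMcomp, hMconv⟩ := aux_isCompact_convexHull_biUnion I KK hKKconv hKKcomp
  have hMeq : closure (convexHull ℝ t) = convexHull ℝ (⋃ p ∈ I, KK p) := by
    apply Set.Subset.antisymm
    · apply closure_minimal _ hMcomp.isClosed
      apply convexHull_min _ hMconv
      intro y hy
      obtain ⟨p, hpI, hpy⟩ := Set.mem_iUnion₂.1 (hIcov hy)
      exact subset_convexHull ℝ _
        (Set.mem_iUnion₂.2 ⟨p, hpI, subset_closure (subset_convexHull ℝ _ ⟨hy, hpy⟩)⟩)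
    · apply convexHull_min _ ((convex_convexHull ℝ t).closure)
      exact Set.iUnion₂_subset fun p _ => hKKsub p
  -- x is an extreme point of the hull of the pieces, hence lies in a piece
  have hxM : x ∈ ⋃ p ∈ I, KK p :=
    aux_extremePoints_convexHull_biUnion I KK hKKconv (hMeq ▸ hx)
  obtain ⟨p, hpI, hxp⟩ := Set.mem_iUnion₂.1 hxM
  -- but each piece stays W̄-close to its center, contradiction
  have hpiece : KK p ⊆ {y | y - p ∈ closure W} := by
    have h1 : convexHull ℝ (t ∩ (fun y => y - p) ⁻¹' W) ⊆ {y | y - p ∈ W} := by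
      apply convexHull_min Set.inter_subset_right
      intro a ha b hb u v hu hv huv
      have hp' : u • p + v • p = p := by rw [← add_smul, huv, one_smul]
      have hkey : u • (a - p) + v • (b - p) = u • a + v • b - (u • p + v • p) := by
        rw [smul_sub, smul_sub]; abel
      rw [hp'] at hkey
      have ha' : a - p ∈ W := ha
      have hb' : b - p ∈ W := hb
      show u • a + v • b - p ∈ W
      rw [← hkey]
      exact hWconv ha' hb' hu hv huv
    have h2 : IsClosed {y : E | y - p ∈ closure W} :=
      IsClosed.preimage (by fun_prop) isClosed_closure
    refine closure_minimal (h1.trans ?_) h2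
    intro y hy
    exact subset_closure hy
  have : x - p ∈ closure W := hpiece hxp
  have hxF : x - p ∈ (fun q => x - q) '' t := ⟨p, hIt p hpI, rfl⟩
  exact hNsub (closure_minimal hWN hNclosed this) hxF

end Milman

section FlowLemmas

variable {G : Type u} [Group G] [TopologicalSpace G] [IsTopologicalGroup G]

lemma AffineFlow.continuousOn_smul_const (K : AffineFlow.{u, v} G) (g : G) :
    ContinuousOn (K.smul g) K.carrier := by
  have h := K.continuousOn_smul'
  have heq : K.smul g = (fun p : G × K.E => K.smul p.1 p.2) ∘ (fun x => (g, x)) := rfl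
  rw [heq]
  exact h.comp (Continuous.continuousOn (by fun_prop))
    (fun x hx => ⟨Set.mem_univ _, hx⟩)

lemma AffineFlow.smul_extremePoint (K : AffineFlow.{u, v} G) (g : G) {x : K.E}
    (hx : x ∈ K.carrier.extremePoints ℝ) : K.smul g x ∈ K.carrier.extremePoints ℝ := by
  rw [mem_extremePoints] at hx ⊢
  obtain ⟨hxK, hext⟩ := hx
  have hinv : ∀ h : G, ∀ w ∈ K.carrier, K.smul h (K.smul h⁻¹ w) = w := by
    intro h w hw
    rw [← K.mul_smul' h h⁻¹ w hw, mul_inv_cancel, K.one_smul' w hw]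
  refine ⟨K.smul_mem' g x hxK, ?_⟩
  intro y₁ hy₁ y₂ hy₂ hseg
  obtain ⟨a, b, ha, hb, hab, heq⟩ := hseg
  have hz₁ : K.smul g⁻¹ y₁ ∈ K.carrier := K.smul_mem' g⁻¹ y₁ hy₁
  have hz₂ : K.smul g⁻¹ y₂ ∈ K.carrier := K.smul_mem' g⁻¹ y₂ hy₂
  have h2 : K.smul g⁻¹ (a • y₁ + b • y₂) = a • K.smul g⁻¹ y₁ + b • K.smul g⁻¹ y₂ := by
    have hb' : b = 1 - a := by linarith
    rw [hb']
    exact K.smul_affine' g⁻¹ y₁ hy₁ y₂ hy₂ a ha.le (by linarith)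
  have h1 : K.smul g⁻¹ (K.smul g x) = x := by
    rw [← K.mul_smul' g⁻¹ g x hxK, inv_mul_cancel, K.one_smul' x hxK]
  have hx' : x = a • K.smul g⁻¹ y₁ + b • K.smul g⁻¹ y₂ := by
    rw [← h2, heq, h1]
  have hres := hext (K.smul g⁻¹ y₁) hz₁ (K.smul g⁻¹ y₂) hz₂ ⟨a, b, ha, hb, hab, hx'.symm⟩
  constructor
  · rw [← hinv g y₁ hy₁, hres.1]
  · rw [← hinv g y₂ hy₂, hres.2]

lemma AffineFlow.closure_extremePoints_subset (K : AffineFlow.{u, v} G) :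
    closure (K.carrier.extremePoints ℝ) ⊆ K.carrier :=
  closure_minimal (fun _ hy => hy.1) K.isCompact'.isClosed

lemma AffineFlow.smul_mem_closure_extremePoints (K : AffineFlow.{u, v} G) (g : G) {x : K.E}
    (hx : x ∈ closure (K.carrier.extremePoints ℝ)) :
    K.smul g x ∈ closure (K.carrier.extremePoints ℝ) := by
  have hc : ContinuousOn (K.smul g) (closure (K.carrier.extremePoints ℝ)) :=
    (K.continuousOn_smul_const g).mono K.closure_extremePoints_subset
  have h1 : K.smul g x ∈ K.smul g '' closure (K.carrier.extremePoints ℝ) := ⟨x, hx, rfl⟩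
  have h2 := hc.image_closure h1
  refine closure_mono ?_ h2
  rintro _ ⟨z, hz, rfl⟩
  exact K.smul_extremePoint g hz

lemma AffineFlow.closure_convexHull_invariant (K : AffineFlow.{u, v} G) {S : Set K.E}
    (hSsub : S ⊆ K.carrier) (hinv : ∀ g : G, ∀ x ∈ S, K.smul g x ∈ S) (g : G) :
    ∀ x ∈ closure (convexHull ℝ S), K.smul g x ∈ closure (convexHull ℝ S) := by
  have hhull_sub : convexHull ℝ S ⊆ K.carrier := convexHull_min hSsub K.convex'
  have hhull : ∀ x ∈ convexHull ℝ S, K.smul g x ∈ convexHull ℝ S := by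
    have hT : convexHull ℝ S ⊆ convexHull ℝ S ∩ (K.smul g) ⁻¹' (convexHull ℝ S) := by
      apply convexHull_min
      · intro x hx
        exact ⟨subset_convexHull ℝ S hx, subset_convexHull ℝ S (hinv g x hx)⟩
      · rintro x ⟨hx, hgx⟩ y ⟨hy, hgy⟩ a b ha hb hab
        refine ⟨(convex_convexHull ℝ S) hx hy ha hb hab, ?_⟩
        have hb' : b = 1 - a := by linarith
        have := K.smul_affine' g x (hhull_sub hx) y (hhull_sub hy) a ha (by linarith)
        simp only [Set.mem_preimage, hb', this]
        exact (convex_convexHull ℝ S) hgx hgy ha (by linarith) (by ring)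
    intro x hx
    exact (hT hx).2
  have hclsub : closure (convexHull ℝ S) ⊆ K.carrier :=
    closure_minimal hhull_sub K.isCompact'.isClosed
  intro x hx
  have hc : ContinuousOn (K.smul g) (closure (convexHull ℝ S)) :=
    (K.continuousOn_smul_const g).mono hclsub
  exact closure_mono (Set.image_subset_iff.2 fun z hz => hhull z hz) (hc.image_closure ⟨x, hx, rfl⟩)

/-- Key lemma: an affine `G`-irreducible extension maps the closure of the extreme points of
`K` into the closure of the extreme points of `P`. -/
lemma key_ext_subset {K : AffineFlow.{u, v} G} {P : AffineFlow.{u, w} G} {φ : K.E → P.E}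
    (hφ : IsAffineIrreducibleExt K P φ) :
    closure (K.carrier.extremePoints ℝ) ⊆
      K.carrier ∩ φ ⁻¹' (closure (P.carrier.extremePoints ℝ)) := by
  obtain ⟨⟨⟨hmaps, hcont, hequiv, haff⟩, himg⟩, hirr⟩ := hφ
  set S := K.carrier ∩ φ ⁻¹' (closure (P.carrier.extremePoints ℝ)) with hSdef
  have hSclosed : IsClosed S :=
    hcont.preimage_isClosed_of_isClosed K.isCompact'.isClosed isClosed_closure
  have hSsub : S ⊆ K.carrier := Set.inter_subset_left
  -- S is nonempty
  have hKM := closure_convexHull_extremePoints P.isCompact' P.convex'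
  have hextP : (P.carrier.extremePoints ℝ).Nonempty := by
    by_contra h
    rw [Set.not_nonempty_iff_eq_empty] at h
    rw [h] at hKM
    simp only [convexHull_empty, closure_empty] at hKM
    exact P.nonempty'.ne_empty hKM.symm
  obtain ⟨p0, hp0⟩ := hextP
  have hp0c : p0 ∈ P.carrier := hp0.1
  rw [← himg] at hp0c
  obtain ⟨x0, hx0, hx0p⟩ := hp0c
  have hSne : S.Nonempty :=
    ⟨x0, hx0, by rw [Set.mem_preimage, hx0p]; exact subset_closure hp0⟩
  -- S is G-invariant
  have hSinv : ∀ g : G, ∀ x ∈ S, K.smul g x ∈ S := by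
    rintro g x ⟨hx1, hx2⟩
    refine ⟨K.smul_mem' g x hx1, ?_⟩
    rw [Set.mem_preimage, hequiv g x hx1]
    exact P.smul_mem_closure_extremePoints g hx2
  -- the closed convex hull of S is an affine subflow mapping onto P
  set D := closure (convexHull ℝ S) with hDdef
  have hDsub : D ⊆ K.carrier :=
    closure_minimal (convexHull_min hSsub K.convex') K.isCompact'.isClosed
  have hDconv : Convex ℝ D := (convex_convexHull ℝ S).closure
  have hDne : D.Nonempty := hSne.mono ((subset_convexHull ℝ S).trans subset_closure)
  have hDsubflow : K.IsAffineSubflow D :=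
    ⟨hDne, hDsub, isClosed_closure, hDconv,
      fun g x hx => K.closure_convexHull_invariant hSsub hSinv g x hx⟩
  have hDcompact : IsCompact D :=
    IsCompact.of_isClosed_subset K.isCompact' isClosed_closure hDsub
  have himD : φ '' D ⊆ P.carrier := by
    rintro _ ⟨x, hx, rfl⟩
    exact hmaps (hDsub hx)
  have hconvD : Convex ℝ (φ '' D) := aux_image_convex φ haff hDsub hDconv
  have hclosedD : IsClosed (φ '' D) :=
    (hDcompact.image_of_continuousOn (hcont.mono hDsub)).isClosed
  have hsupset : closure (P.carrier.extremePoints ℝ) ⊆ φ '' D := by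
    intro p hp
    have hpc : p ∈ P.carrier := P.closure_extremePoints_subset hp
    rw [← himg] at hpc
    obtain ⟨x, hx, rfl⟩ := hpc
    exact ⟨x, (subset_convexHull ℝ S).trans subset_closure ⟨hx, hp⟩, rfl⟩
  have hPsub : P.carrier ⊆ φ '' D := by
    rw [← hKM]
    exact closure_minimal
      (convexHull_min (subset_closure.trans hsupset) hconvD) hclosedD
  have hDeq : D = K.carrier := by
    by_contra hne
    exact hirr D hDsubflow hne (Set.Subset.antisymm himD hPsub)
  -- Milman's theorem
  have hScompact : IsCompact S := IsCompact.of_isClosed_subset K.isCompact' hSclosed hSsub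
  have hmil : (closure (convexHull ℝ S)).extremePoints ℝ ⊆ S := aux_milman hScompact hDcompact
  have hext : K.carrier.extremePoints ℝ ⊆ S := by
    rw [← hDeq]
    exact hmil
  exact closure_minimal hext hSclosed

end FlowLemmas

set_option maxHeartbeats 1000000 in
/-- **Statement 12.** The composition of an affine `G`-irreducible extension followed by a
proximally irreducible extension is proximally irreducible. -/
theorem statement12 {G : Type u} [Group G] [TopologicalSpace G] [IsTopologicalGroup G]
    (K : AffineFlow.{u, v} G) (P : AffineFlow.{u, w} G) (L : AffineFlow.{u, x} G)
    (φ : K.E → P.E) (ψ : P.E → L.E)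
    (hφ : IsAffineIrreducibleExt K P φ) (hψ : IsProximallyIrreducibleExt P L ψ) :
    IsProximallyIrreducibleExt K L (ψ ∘ φ) := by
  obtain ⟨⟨⟨hφmaps, hφcont, hφequiv, hφaff⟩, hφimg⟩, hφirr⟩ := hφ
  obtain ⟨⟨⟨hψmaps, hψcont, hψequiv, hψaff⟩, hψimg⟩, hψirr⟩ := hψ
  have hkey := key_ext_subset (K := K) (P := P) (φ := φ)
    ⟨⟨⟨hφmaps, hφcont, hφequiv, hφaff⟩, hφimg⟩, hφirr⟩
  constructor
  · -- `ψ ∘ φ` is an affine extension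
    refine ⟨⟨hψmaps.comp hφmaps, hψcont.comp hφcont hφmaps, ?_, ?_⟩, ?_⟩
    · intro g x hx
      simp only [Function.comp_apply]
      rw [hφequiv g x hx, hψequiv g (φ x) (hφmaps hx)]
    · intro x hx y hy t ht0 ht1
      simp only [Function.comp_apply]
      rw [hφaff x hx y hy t ht0 ht1, hψaff (φ x) (hφmaps hx) (φ y) (hφmaps hy) t ht0 ht1]
    · rw [Set.image_comp, hφimg, hψimg]
  · -- proximal irreducibility
    intro C hC hCmeet
    obtain ⟨hCne, hCsub, hCclosed, hCconv, hCinv⟩ := hC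
    -- the image of C is an affine subflow of P
    have hCcompact : IsCompact C := IsCompact.of_isClosed_subset K.isCompact' hCclosed hCsub
    have hC'sub : φ '' C ⊆ P.carrier := by
      rintro _ ⟨x, hx, rfl⟩
      exact hφmaps (hCsub hx)
    have hC'subflow : P.IsAffineSubflow (φ '' C) := by
      refine ⟨hCne.image φ, hC'sub,
        (hCcompact.image_of_continuousOn (hφcont.mono hCsub)).isClosed,
        aux_image_convex φ hφaff hCsub hCconv, ?_⟩
      rintro g _ ⟨x, hx, rfl⟩
      rw [← hφequiv g x (hCsub hx)]
      exact ⟨K.smul g x, hCinv g x hx, rfl⟩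
    -- the image of C meets the relevant fibers
    have hC'meet : ∀ y ∈ closure (L.carrier.extremePoints ℝ),
        ((φ '' C) ∩ convexHull ℝ (closure (P.carrier.extremePoints ℝ) ∩ ψ ⁻¹' {y})).Nonempty := by
      intro y hy
      obtain ⟨x, hxC, hxconv⟩ := hCmeet y hy
      refine ⟨φ x, ⟨x, hxC, rfl⟩, ?_⟩
      have hA : closure (K.carrier.extremePoints ℝ) ∩ (ψ ∘ φ) ⁻¹' {y} ⊆ K.carrier :=
        Set.inter_subset_left.trans K.closure_extremePoints_subset
      have h1 : φ x ∈ φ '' (convexHull ℝ (closure (K.carrier.extremePoints ℝ) ∩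
          (ψ ∘ φ) ⁻¹' {y})) := ⟨x, hxconv, rfl⟩
      have h2 := aux_image_convexHull φ K.convex' hφaff hA h1
      refine convexHull_mono ?_ h2
      rintro _ ⟨z, ⟨hz1, hz2⟩, rfl⟩
      exact ⟨(hkey hz1).2, hz2⟩
    have hC'eq : φ '' C = P.carrier := hψirr (φ '' C) hC'subflow hC'meet
    by_contra hne
    exact hφirr C ⟨hCne, hCsub, hCclosed, hCconv, hCinv⟩ hne hC'eq
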